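/- For a finite group G of order m acting on R^n and a test statistic T, if X is G-invariant in distribution and the values T(gX) for g ∈ G are almost surely distinct, then the probability that T(X) exceeds all but at most ⌊αm⌋−1 of the values {T(gX) : g ∈ G} is exactly ⌊αm⌋/m. -/

import Mathlib

open MeasureTheory Finset

lemma rank_lemma {G : Type*} [Fintype G] [DecidableEq G] {v : G → ℝ} (hv : Function.Injective v)
    {k : ℕ} (hk : k ≤ Fintype.card G) :
    (univ.filter (fun g : G => (univ.filter (fun h : G => v g ≤ v h)).card ≤ k)).card = k := by
  classical
  set r : G → ℕ := fun g => (univ.filter (fun h : G => v g ≤ v h)).card with hr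
  have hmono : ∀ g g', v g < v g' → r g' < r g := by
    intro g g' hlt
    apply Finset.card_lt_card
    constructor
    · intro h hh
      simp only [mem_filter, mem_univ, true_and] at *
      exact hlt.le.trans hh
    · intro hsub
      have hg : g ∈ univ.filter (fun h : G => v g ≤ v h) := by simp
      have := hsub hg
      simp only [mem_filter, mem_univ, true_and] at this
      exact absurd this (not_le.mpr hlt)
  have hinj : Function.Injective r := by
    intro g g' h
    by_contra hne
    rcases lt_or_gt_of_ne (fun hv' => hne (hv hv')) with hlt | hlt
    · exact absurd h.symm (Nat.ne_of_lt (hmono _ _ hlt))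
    · exact absurd h (Nat.ne_of_lt (hmono _ _ hlt))
  have hrange : ∀ g, r g ∈ Finset.Icc 1 (Fintype.card G) := by
    intro g
    simp only [Finset.mem_Icc]
    constructor
    · have : g ∈ univ.filter (fun h : G => v g ≤ v h) := by simp
      exact Finset.card_pos.mpr ⟨g, this⟩
    · exact (Finset.card_filter_le _ _).trans (by simp)
  have himage : (univ.image r) = Finset.Icc 1 (Fintype.card G) := by
    apply Finset.eq_of_subset_of_card_le
    · intro x hx
      simp only [mem_image, mem_univ, true_and] at hx
      obtain ⟨g, rfl⟩ := hx; exact hrange g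
    · rw [Finset.card_image_of_injective _ hinj]
      simp [Nat.card_Icc]
  have key : (univ.filter (fun g => r g ≤ k)).image r = (univ.image r).filter (· ≤ k) := by
    ext x
    simp only [mem_image, mem_filter, mem_univ, true_and]
    constructor
    · rintro ⟨g, hg, rfl⟩; exact ⟨⟨g, rfl⟩, hg⟩
    · rintro ⟨⟨g, rfl⟩, hg⟩; exact ⟨g, hg, rfl⟩
  have hcard := congrArg Finset.card key
  rw [Finset.card_image_of_injective _ hinj, himage] at hcard
  rw [hcard]
  have : Finset.filter (· ≤ k) (Finset.Icc 1 (Fintype.card G)) = Finset.Icc 1 k := by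
    ext x
    simp only [mem_filter, Finset.mem_Icc]
    omega
  rw [this, Nat.card_Icc]
  omega

/-- If `X` is `G`-invariant in distribution, `|G| = m`, and the reference values
`T(g X)`, `g ∈ G`, are almost surely pairwise distinct, then the probability that the
rank (from the top) of `T(X)` among `{T(g X) : g ∈ G}` is at most `⌊α m⌋` is
exactly `⌊α m⌋ / m`. -/
theorem group_invariance_test_exact_size
    {Ω : Type*} [MeasurableSpace Ω] (P : Measure Ω) [IsProbabilityMeasure P]
    {n : ℕ} {G : Type*} [Group G] [Fintype G] (m : ℕ) (hm : Fintype.card G = m)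
    (f : G →* Function.End (Fin n → ℝ))
    (hmeas : ∀ g : G, Measurable (f g))
    (X : Ω → (Fin n → ℝ)) (hX : Measurable X)
    (T : (Fin n → ℝ) → ℝ) (hT : Measurable T)
    (hinv : ∀ g : G, Measure.map (fun ω => f g (X ω)) P = Measure.map X P)
    (hdistinct : ∀ᵐ ω ∂P, Function.Injective (fun g : G => T (f g (X ω))))
    (α : ℝ) (hα0 : 0 < α) (hα1 : α < 1) :
    P {ω | (Finset.univ.filter (fun g : G => T (X ω) ≤ T (f g (X ω)))).card ≤ ⌊α * m⌋₊} =
      (⌊α * m⌋₊ : ENNReal) / (m : ENNReal) := by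
  classical
  set k : ℕ := ⌊α * m⌋₊ with hk
  have hm0 : 0 < m := hm ▸ Fintype.card_pos
  have hkm : k ≤ m := by
    have h1 : (k : ℝ) ≤ α * m := Nat.floor_le (by positivity)
    have h2 : α * m < m := by
      have : (0:ℝ) < m := by exact_mod_cast hm0
      nlinarith
    have : (k : ℝ) < m := h1.trans_lt h2
    exact_mod_cast this.le
  -- rank function on the sample space
  set R : G → (Fin n → ℝ) → ℕ :=
    fun g x => (univ.filter (fun h : G => T (f g x) ≤ T (f h x))).card with hR
  -- R g x = R 1 (f g x)
  have hRcov : ∀ (g : G) (x : Fin n → ℝ), R 1 (f g x) = R g x := by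
    intro g x
    simp only [hR]
    have h1 : ∀ h : G, f h (f g x) = f (h * g) x := by
      intro h
      rw [map_mul]
      rfl
    have h2 : f (1 : G) (f g x) = f g x := by rw [map_one]; rfl
    calc (univ.filter (fun h : G => T (f 1 (f g x)) ≤ T (f h (f g x)))).card
        = (univ.filter (fun h : G => T (f g x) ≤ T (f (h * g) x))).card := by
          apply Finset.card_bij (fun h _ => h) <;> simp [h1, h2]
      _ = (univ.filter (fun h : G => T (f g x) ≤ T (f h x))).card := by
          apply Finset.card_nbij (fun h => h * g)
          · intro h hh
            simp only [mem_coe, mem_filter, mem_univ, true_and] at *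
            exact hh
          · intro a ha b hb hab
            exact mul_right_cancel hab
          · intro b hb
            refine ⟨b * g⁻¹, ?_, by group⟩
            simp only [mem_coe, mem_filter, mem_univ, true_and] at *
            rwa [inv_mul_cancel_right]
  -- measurability of R 1
  have hRmeas : ∀ g : G, Measurable (R g) := by
    intro g
    have : R g = fun x => ∑ h : G, if T (f g x) ≤ T (f h x) then 1 else 0 := by
      funext x
      simp only [hR]
      rw [Finset.card_filter]
    rw [this]
    apply Finset.measurable_sum
    intro h _
    exact Measurable.ite (measurableSet_le (hT.comp (hmeas g)) (hT.comp (hmeas h)))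
      measurable_const measurable_const
  have hSmeas : MeasurableSet {x : Fin n → ℝ | R 1 x ≤ k} :=
    measurableSet_le (hRmeas 1) measurable_const
  -- events
  set A : G → Set Ω := fun g => {ω | R g (X ω) ≤ k} with hA
  have hAmeas : ∀ g, MeasurableSet (A g) := by
    intro g
    exact measurableSet_le ((hRmeas g).comp hX) measurable_const
  -- all events have the same probability
  have hAeq : ∀ g : G, P (A g) = P (A 1) := by
    intro g
    have h1 : A g = (fun ω => f g (X ω)) ⁻¹' {x | R 1 x ≤ k} := by
      ext ω
      simp [hA, Set.mem_preimage, hRcov g (X ω)]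
    have h2 : A 1 = X ⁻¹' {x | R 1 x ≤ k} := by ext ω; simp [hA]
    rw [h1, h2]
    have hma := Measure.map_apply (μ := P) (f := fun ω => f g (X ω))
      ((hmeas g).comp hX) hSmeas
    rw [← hma, hinv g, Measure.map_apply hX hSmeas]
  -- the sum of indicators equals k a.s.
  have hsum : ∀ᵐ ω ∂P, ∑ g : G, (A g).indicator (fun _ => (1 : ENNReal)) ω = k := by
    filter_upwards [hdistinct] with ω hω
    have : ∑ g : G, (A g).indicator (fun _ => (1 : ENNReal)) ω
        = (univ.filter (fun g : G => R g (X ω) ≤ k)).card := by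
      rw [Finset.card_filter]
      push_cast
      apply Finset.sum_congr rfl
      intro g _
      by_cases h : R g (X ω) ≤ k
      · simp [Set.indicator_of_mem, hA, h]
      · simp [Set.indicator_of_notMem, hA, h]
    rw [this]
    norm_cast
    exact rank_lemma hω (hm ▸ hkm)
  -- integrate
  have hint : ∑ g : G, P (A g) = k := by
    have h1 : ∑ g : G, P (A g)
        = ∫⁻ ω, ∑ g : G, (A g).indicator (fun _ => (1 : ENNReal)) ω ∂P := by
      rw [lintegral_finset_sum _ (fun g _ =>
        (measurable_const.indicator (hAmeas g)))]
      apply Finset.sum_congr rfl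
      intro g _
      exact (lintegral_indicator_one (hAmeas g)).symm
    rw [h1, lintegral_congr_ae hsum]
    simp
  rw [Finset.sum_congr rfl (fun g _ => hAeq g), Finset.sum_const, Finset.card_univ, hm] at hint
  have hP1 : P (A 1) = (k : ENNReal) / (m : ENNReal) := by
    rw [ENNReal.eq_div_iff (by exact_mod_cast hm0.ne') (by simp), ← hint]
    simp [mul_comm, nsmul_eq_mul]
  have hevent : {ω | (Finset.univ.filter
      (fun g : G => T (X ω) ≤ T (f g (X ω)))).card ≤ ⌊α * m⌋₊} = A 1 := by
    ext ω
    have h2 : f (1 : G) (X ω) = X ω := by rw [map_one]; rfl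
    simp only [hA, hR, Set.mem_setOf_eq, h2, hk]
  rw [hevent, hP1]
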